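/- For every integer ℓ ≥ 1, every integer p ≥ 1, and every real x ≥ e, one has |((log)^ℓ)^{(p)}(x)|/p! ≤ 2^ℓ p^ℓ (log x)^{ℓ-1} / x^p, where (log)^ℓ denotes the ℓ-th power of the logarithm, x ↦ (log x)^ℓ. -/

import Mathlib

open Set Real

lemma log_iterDeriv (m : ℕ) : ∀ x ∈ Set.Ioi (0:ℝ),
    iteratedDerivWithin (m+1) Real.log (Set.Ioi 0) x
      = (-1:ℝ)^m * m.factorial * x ^ (-(m+1:ℤ)) := by
  induction m with
  | zero =>
    intro x hx
    rw [iteratedDerivWithin_one,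
      derivWithin_of_isOpen isOpen_Ioi hx, Real.deriv_log]
    simp [zpow_neg]
  | succ m ih =>
    intro x hx
    rw [iteratedDerivWithin_succ,
      derivWithin_of_isOpen isOpen_Ioi hx]
    have hev : iteratedDerivWithin (m+1) Real.log (Set.Ioi 0)
        =ᶠ[nhds x] fun y => (-1:ℝ)^m * m.factorial * y ^ (-(m+1:ℤ)) :=
      Filter.eventuallyEq_of_mem (isOpen_Ioi.mem_nhds hx) ih
    rw [hev.deriv_eq]
    have hx0 : (x:ℝ) ≠ 0 := ne_of_gt hx
    rw [deriv_const_mul _ (differentiableAt_zpow.mpr (Or.inl hx0)), deriv_zpow]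
    have h1 : (-(m+1:ℤ)) - 1 = -(m+1+1:ℤ) := by ring
    rw [h1]
    push_cast [Nat.factorial_succ]
    ring_nf

lemma log_abs_iterDeriv {i : ℕ} (hi : 1 ≤ i) {x : ℝ} (hx : 0 < x) :
    |iteratedDerivWithin i Real.log (Set.Ioi 0) x| = (i-1).factorial / x ^ i := by
  obtain ⟨m, rfl⟩ := Nat.exists_eq_add_of_le hi
  rw [Nat.add_comm 1 m, log_iterDeriv m x hx]
  rw [abs_mul, abs_mul, abs_pow, abs_neg, abs_one, one_pow, one_mul,
    Nat.add_sub_cancel, Nat.abs_cast]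
  rw [zpow_neg, abs_inv, abs_of_pos (by positivity), div_eq_mul_inv]
  have h2 : ((m:ℤ)+1) = ((m+1 : ℕ) : ℤ) := by push_cast; ring
  rw [h2, zpow_natCast]

lemma key (n : ℕ) : ∀ p : ℕ, 1 ≤ p → ∀ x : ℝ, Real.exp 1 ≤ x →
    |iteratedDerivWithin p (fun y => Real.log y ^ (n+1)) (Set.Ioi 0) x| ≤
      p.factorial * (p+1:ℝ) ^ n * Real.log x ^ n / x ^ p := by
  induction n with
  | zero =>
    intro p hp x hx
    have hx0 : (0:ℝ) < x := lt_of_lt_of_le (Real.exp_pos 1) hx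
    simp only [zero_add, pow_one, pow_zero, mul_one, one_mul]
    rw [log_abs_iterDeriv hp hx0]
    have h : ((p-1).factorial : ℝ) ≤ p.factorial :=
      Nat.cast_le.mpr (Nat.factorial_le (Nat.sub_le p 1))
    exact div_le_div_of_nonneg_right h (by positivity)
  | succ n ih =>
    intro p hp x hx
    have hx0 : (0:ℝ) < x := lt_of_lt_of_le (Real.exp_pos 1) hx
    have hxs : x ∈ Set.Ioi (0:ℝ) := hx0
    have hlog : 1 ≤ Real.log x := (Real.le_log_iff_exp_le hx0).mpr hx
    have hlog0 : 0 ≤ Real.log x := le_trans zero_le_one hlog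
    have hsub : Set.Ioi (0:ℝ) ⊆ {0}ᶜ := fun y hy => ne_of_gt hy
    have hcf : ContDiffOn ℝ (⊤ : WithTop ℕ∞) Real.log (Set.Ioi 0) :=
      Real.contDiffOn_log.mono hsub
    have hcg : ContDiffOn ℝ (⊤ : WithTop ℕ∞) (fun y => Real.log y ^ (n+1)) (Set.Ioi 0) :=
      hcf.pow _
    have hfun : (fun y => Real.log y ^ (n+1+1))
        = fun y => Real.log y * Real.log y ^ (n+1) := by
      funext y; ring
    rw [hfun, ← Real.norm_eq_abs,
      ← norm_iteratedFDerivWithin_eq_norm_iteratedDerivWithin]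
    have hle := norm_iteratedFDerivWithin_mul_le (𝕜 := ℝ) (N := (⊤ : WithTop ℕ∞)) hcf hcg
      (uniqueDiffOn_Ioi 0) hxs (n := p) le_top
    refine hle.trans ?_
    set M : ℝ := p.factorial * (p+1:ℝ) ^ n * Real.log x ^ (n+1) / x ^ p with hM
    have hterm : ∀ i ∈ Finset.range (p+1),
        (p.choose i : ℝ) * ‖iteratedFDerivWithin ℝ i Real.log (Set.Ioi 0) x‖ *
          ‖iteratedFDerivWithin ℝ (p-i) (fun y => Real.log y ^ (n+1)) (Set.Ioi 0) x‖ ≤ M := by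
      intro i hi
      rw [Finset.mem_range, Nat.lt_succ_iff] at hi
      rw [norm_iteratedFDerivWithin_eq_norm_iteratedDerivWithin,
        norm_iteratedFDerivWithin_eq_norm_iteratedDerivWithin,
        Real.norm_eq_abs, Real.norm_eq_abs]
      rcases Nat.eq_zero_or_pos i with hi0 | hi1
      · -- i = 0
        subst hi0
        simp only [Nat.choose_zero_right, Nat.cast_one, one_mul, Nat.sub_zero,
          iteratedDerivWithin_zero]
        rw [abs_of_nonneg hlog0]
        calc Real.log x * |iteratedDerivWithin p (fun y => Real.log y ^ (n+1)) (Set.Ioi 0) x|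
            ≤ Real.log x * (p.factorial * (p+1:ℝ) ^ n * Real.log x ^ n / x ^ p) :=
              mul_le_mul_of_nonneg_left (ih p hp x hx) hlog0
          _ = M := by rw [hM]; ring
      · rcases Nat.lt_or_ge i p with hip | hip
        · -- 1 ≤ i < p
          have hpi : 1 ≤ p - i := Nat.le_sub_of_add_le (by omega)
          rw [log_abs_iterDeriv hi1 hx0]
          have hg := ih (p-i) hpi x hx
          have hchoose : (p.choose i : ℝ) * (i-1).factorial * (p-i).factorial
              ≤ p.factorial := by
            have h1 : p.choose i * (i-1).factorial * (p-i).factorial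
                ≤ p.choose i * i.factorial * (p-i).factorial := by
              have := Nat.factorial_le (Nat.sub_le i 1)
              exact Nat.mul_le_mul_right _ (Nat.mul_le_mul_left _ this)
            have h2 : p.choose i * i.factorial * (p-i).factorial = p.factorial :=
              Nat.choose_mul_factorial_mul_factorial hi
            calc ((p.choose i : ℝ) * (i-1).factorial * (p-i).factorial)
                = ((p.choose i * (i-1).factorial * (p-i).factorial : ℕ) : ℝ) := by push_cast; ring
              _ ≤ (p.factorial : ℝ) := by exact_mod_cast h1.trans_eq h2
          calc (p.choose i : ℝ) * ((i-1).factorial / x ^ i) *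
              |iteratedDerivWithin (p-i) (fun y => Real.log y ^ (n+1)) (Set.Ioi 0) x|
              ≤ (p.choose i : ℝ) * ((i-1).factorial / x ^ i) *
                ((p-i).factorial * ((p-i:ℕ)+1:ℝ) ^ n * Real.log x ^ n / x ^ (p-i)) := by
                apply mul_le_mul_of_nonneg_left hg (by positivity)
            _ = ((p.choose i : ℝ) * (i-1).factorial * (p-i).factorial) *
                ((p-i:ℕ)+1:ℝ) ^ n * Real.log x ^ n / (x ^ i * x ^ (p-i)) := by
                field_simp
            _ = ((p.choose i : ℝ) * (i-1).factorial * (p-i).factorial) *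
                ((p-i:ℕ)+1:ℝ) ^ n * Real.log x ^ n / x ^ p := by
                rw [← pow_add, Nat.add_sub_cancel' hip.le]
            _ ≤ (p.factorial : ℝ) * (p+1:ℝ) ^ n * Real.log x ^ (n+1) / x ^ p := by
                refine div_le_div_of_nonneg_right ?_ (by positivity)
                have h3 : ((p-i:ℕ)+1:ℝ) ^ n ≤ (p+1:ℝ) ^ n := by
                  have hc : ((p-i:ℕ):ℝ) ≤ (p:ℝ) := Nat.cast_le.mpr (Nat.sub_le p i)
                  exact pow_le_pow_left₀ (by positivity) (by linarith) n
                have h4 : Real.log x ^ n ≤ Real.log x ^ (n+1) :=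
                  pow_le_pow_right₀ hlog (Nat.le_succ n)
                exact mul_le_mul (mul_le_mul hchoose h3 (by positivity) (by positivity))
                  h4 (by positivity) (by positivity)
            _ = M := hM.symm
        · -- i = p
          have hip' : i = p := le_antisymm hi hip
          subst hip'
          simp only [Nat.choose_self, Nat.cast_one, one_mul, Nat.sub_self,
            iteratedDerivWithin_zero]
          rw [log_abs_iterDeriv hi1 hx0, abs_pow, abs_of_nonneg hlog0]
          rw [div_mul_eq_mul_div, hM]
          refine div_le_div_of_nonneg_right ?_ (by positivity)
          have h1 : ((i-1).factorial : ℝ) ≤ i.factorial :=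
            Nat.cast_le.mpr (Nat.factorial_le (Nat.sub_le i 1))
          have h2 : (1:ℝ) ≤ ((i:ℝ)+1) ^ n :=
            one_le_pow₀ (by linarith [Nat.cast_nonneg (α := ℝ) i] : (1:ℝ) ≤ (i:ℝ)+1)
          nlinarith [pow_nonneg hlog0 (n+1),
            mul_le_mul_of_nonneg_right h1 (pow_nonneg hlog0 (n+1)),
            mul_le_mul_of_nonneg_left h2
              (mul_nonneg (Nat.cast_nonneg i.factorial) (pow_nonneg hlog0 (n+1)))]
    calc (∑ i ∈ Finset.range (p+1), (p.choose i : ℝ) *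
          ‖iteratedFDerivWithin ℝ i Real.log (Set.Ioi 0) x‖ *
          ‖iteratedFDerivWithin ℝ (p-i) (fun y => Real.log y ^ (n+1)) (Set.Ioi 0) x‖)
        ≤ ∑ i ∈ Finset.range (p+1), M := Finset.sum_le_sum hterm
      _ = (p+1:ℝ) * M := by rw [Finset.sum_const, Finset.card_range]; push_cast; ring
      _ = p.factorial * (p+1:ℝ) ^ (n+1) * Real.log x ^ (n+1) / x ^ p := by
        rw [hM]; ring

/-- For every integer `ℓ ≥ 1`, every integer `p ≥ 1` and every real `x ≥ e`,
`|((log)^ℓ)^{(p)}(x)|/p! ≤ 2^ℓ p^ℓ (log x)^{ℓ-1} / x^p`. -/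
theorem iteratedDeriv_log_pow_le (ℓ p : ℕ) (hℓ : 1 ≤ ℓ) (hp : 1 ≤ p)
    (x : ℝ) (hx : Real.exp 1 ≤ x) :
    |iteratedDeriv p (fun y => Real.log y ^ ℓ) x| / (p.factorial : ℝ) ≤
      2 ^ ℓ * (p : ℝ) ^ ℓ * Real.log x ^ (ℓ - 1) / x ^ p := by
  obtain ⟨n, rfl⟩ := Nat.exists_eq_add_of_le hℓ
  have hx0 : (0:ℝ) < x := lt_of_lt_of_le (Real.exp_pos 1) hx
  have hxs : x ∈ Set.Ioi (0:ℝ) := hx0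
  have hlog0 : 0 ≤ Real.log x :=
    Real.log_nonneg (by linarith [Real.one_le_exp (zero_le_one (α := ℝ))])
  have heq : |iteratedDeriv p (fun y => Real.log y ^ (1+n)) x|
      = |iteratedDerivWithin p (fun y => Real.log y ^ (1+n)) (Set.Ioi 0) x| := by
    rw [← Real.norm_eq_abs, ← Real.norm_eq_abs, ← norm_iteratedFDeriv_eq_norm_iteratedDeriv,
      ← norm_iteratedFDerivWithin_eq_norm_iteratedDerivWithin,
      iteratedFDerivWithin_of_isOpen p isOpen_Ioi hxs]
  have hkey := key n p hp x hx
  rw [add_comm 1 n] at heq ⊢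
  rw [heq, div_le_iff₀ (by exact_mod_cast Nat.factorial_pos p : (0:ℝ) < p.factorial)]
  have hnum : (p.factorial : ℝ) * (p+1:ℝ) ^ n * Real.log x ^ n / x ^ p ≤
      2 ^ (n+1) * (p:ℝ) ^ (n+1) * Real.log x ^ (n+1-1) / x ^ p * p.factorial := by
    rw [Nat.add_sub_cancel, div_mul_eq_mul_div]
    refine div_le_div_of_nonneg_right ?_ (by positivity)
    have hp1 : (1:ℝ) ≤ (p:ℝ) := by exact_mod_cast hp
    have h1 : ((p:ℝ)+1) ^ n ≤ (2*(p:ℝ)) ^ (n+1) := by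
      calc ((p:ℝ)+1) ^ n ≤ (2*(p:ℝ)) ^ n := pow_le_pow_left₀ (by positivity) (by linarith) n
        _ ≤ (2*(p:ℝ)) ^ (n+1) := pow_le_pow_right₀ (by linarith) (Nat.le_succ n)
    calc (p.factorial : ℝ) * (p+1:ℝ) ^ n * Real.log x ^ n
        ≤ (p.factorial : ℝ) * (2*(p:ℝ)) ^ (n+1) * Real.log x ^ n := by
          exact mul_le_mul_of_nonneg_right
            (mul_le_mul_of_nonneg_left h1 (by positivity)) (by positivity)
      _ = 2 ^ (n+1) * (p:ℝ) ^ (n+1) * Real.log x ^ n * p.factorial := by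
          rw [mul_pow]; ring
  exact hkey.trans hnum
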